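/- Let G be a finite simple graph on a vertex set V with n = |V| ≥ 2, α : V → V → ℝ antisymmetric, and v₁ ≠ v₂ in V. Let V' = V ∖ {v₂}, let L : ℂ^{V'} → ℂ^V be the lift defined by (Lψ)(v) = ψ(v) for v ≠ v₂ and (Lψ)(v₂) = ψ(v₁), and let Δ̃ be the self-adjoint positive semidefinite operator on ℂ^{V'} (with the standard inner product Σ_{v∈V'} ψ(v)·conj(χ(v))) determined by the quadratic form ⟨Δ̃ψ, ψ⟩ = q(Lψ), where q(φ) = (1/2)·Σ_{v,u ∈ V, u adjacent to v} |φ(v) − exp(i·α v u)·φ(u)|². Let μ_1 ≤ … ≤ μ_{n−1} be the eigenvalues of Δ̃, and let λ_1 ≤ … ≤ λ_n be the eigenvalues of the magnetic combinatorial Laplacian of (G, α). Set r = min(deg_G v₁, deg_G v₂), and s = 1 if v₁ is adjacent to v₂ and α v₁ v₂ ≡ 0 (mod 2π), s = 0 otherwise. Then λ_k ≤ μ_k for all 1 ≤ k ≤ n − 1, and μ_k ≤ λ_{k + r + 1 − s} for all 1 ≤ k ≤ n − (r + 1 − s). -/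

import Mathlib

/-- The magnetic weighted Laplacian `Δ(w,m,α)` as a matrix acting on `ℂ^V`:
`(Δφ)(v) = (1/m v) · Σ_u w v u · (φ(v) − exp(i·α v u)·φ(u))`. -/
noncomputable def magLap {V : Type} [Fintype V] [DecidableEq V]
    (w : V → V → ℝ) (m : V → ℝ) (α : V → V → ℝ) : Matrix V V ℂ :=
  fun v u => (if v = u then (((∑ u', w v u') / m v : ℝ) : ℂ) else 0)
    - ((w v u / m v : ℝ) : ℂ) * Complex.exp (Complex.I * (α v u : ℝ))

open scoped Classical

/-- The magnetic combinatorial Laplacian of a simple graph: vertex weight `1`,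
edge weight the adjacency indicator. -/
noncomputable def combLap {V : Type} [Fintype V] [DecidableEq V]
    (G : SimpleGraph V) (α : V → V → ℝ) : Matrix V V ℂ :=
  magLap (fun v u => if G.Adj v u then 1 else 0) (fun _ => 1) α

/-- The eigenvalues (with multiplicity, nondecreasing) of a matrix with real
spectrum: real parts of the roots of the characteristic polynomial, sorted;
`lamk A k` is the `(k+1)`-st smallest (0-based index). -/
noncomputable def lamk {V : Type} [Fintype V] [DecidableEq V] (A : Matrix V V ℂ) (k : ℕ) : ℝ :=
  ((A.charpoly.roots.map Complex.re).sort (· ≤ ·)).getD k 0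

/-- The quadratic form of the magnetic combinatorial Laplacian:
`q(φ) = (1/2)·Σ_{v,u adjacent} |φ(v) − exp(i·α v u)·φ(u)|²`. -/
noncomputable def combForm {V : Type} [Fintype V]
    (G : SimpleGraph V) (α : V → V → ℝ) (φ : V → ℂ) : ℝ :=
  (1 / 2) * ∑ v : V, ∑ u : V,
    if G.Adj v u then Complex.normSq (φ v - Complex.exp (Complex.I * (α v u : ℝ)) * φ u) else 0

/-- The lift `L : ℂ^{V ∖ {v₂}} → ℂ^V`, `(Lψ)(v) = ψ(v)` for `v ≠ v₂` and
`(Lψ)(v₂) = ψ(v₁)`. -/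
noncomputable def liftFun {V : Type} [DecidableEq V] {v₁ v₂ : V} (hv : v₁ ≠ v₂)
    (ψ : {v : V // v ≠ v₂} → ℂ) : V → ℂ :=
  fun v => if h : v = v₂ then ψ ⟨v₁, hv⟩ else ψ ⟨v, h⟩


set_option linter.unusedSectionVars false
set_option maxHeartbeats 1000000

namespace Stmt14Aux
noncomputable section
open Matrix Polynomial

variable {I : Type} [Fintype I] [DecidableEq I]

/-- inner product, linear in first slot, matching `∑ x v * star (y v)`. -/
def inn (x y : I → ℂ) : ℂ := ∑ v, x v * star (y v)

def nrm (x : I → ℂ) : ℝ := ∑ v, Complex.normSq (x v)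

lemma inn_self (x : I → ℂ) : inn x x = (nrm x : ℂ) := by
  simp [inn, nrm, Complex.mul_conj]

lemma nrm_nonneg (x : I → ℂ) : 0 ≤ nrm x :=
  Finset.sum_nonneg fun _ _ => Complex.normSq_nonneg _

lemma nrm_pos {x : I → ℂ} (hx : x ≠ 0) : 0 < nrm x := by
  rcases (nrm_nonneg x).lt_or_eq with h | h
  · exact h
  · exfalso; apply hx; funext v
    have := (Finset.sum_eq_zero_iff_of_nonneg (fun _ _ => Complex.normSq_nonneg _)).1 h.symm
    have hv := this v (Finset.mem_univ v)
    simpa using Complex.normSq_eq_zero.1 hv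

lemma inn_add_left (x x' y : I → ℂ) : inn (x + x') y = inn x y + inn x' y := by
  simp [inn, add_mul, Finset.sum_add_distrib]

lemma inn_smul_left (c : ℂ) (x y : I → ℂ) : inn (c • x) y = c * inn x y := by
  simp [inn, Finset.mul_sum, mul_assoc]

lemma inn_smul_right (c : ℂ) (x y : I → ℂ) : inn x (c • y) = star c * inn x y := by
  simp [inn, Finset.mul_sum]; ring_nf; simp [mul_comm, mul_left_comm]

lemma inn_sum_left {N : Type} [Fintype N] (f : N → I → ℂ) (y : I → ℂ) :
    inn (∑ j, f j) y = ∑ j, inn (f j) y := by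
  simp [inn, Finset.sum_mul]
  exact Finset.sum_comm

lemma inn_sum_right {N : Type} [Fintype N] (x : I → ℂ) (f : N → I → ℂ) :
    inn x (∑ j, f j) = ∑ j, inn x (f j) := by
  simp [inn, Finset.mul_sum]
  exact Finset.sum_comm



lemma charpoly_unitary_conj {A D : Matrix I I ℂ} (U : Matrix I I ℂ)
    (hU : U * star U = 1) (hA : A = U * D * star U) :
    A.charpoly = D.charpoly := by
  have hmap : charmatrix A = U.map (C : ℂ →+* ℂ[X]) * charmatrix D * (star U).map C := by
    have hc : charmatrix D = Matrix.scalar I X - D.map C := by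
      ext i j; rw [charmatrix_apply]; rfl
    have hcA : charmatrix A = Matrix.scalar I X - A.map C := by
      ext i j; rw [charmatrix_apply]; rfl
    have hcomm := Matrix.scalar_commute (X : ℂ[X]) (fun r' => Commute.all _ _)
        (U.map (C : ℂ →+* ℂ[X]))
    rw [hcA, hc, Matrix.mul_sub, Matrix.sub_mul, hA]
    congr 1
    · rw [← hcomm.eq, Matrix.mul_assoc, ← Matrix.map_mul, hU]; simp
    · rw [← Matrix.map_mul, ← Matrix.map_mul]
  have hdet1 : (U.map (C : ℂ →+* ℂ[X])).det * ((star U).map (C : ℂ →+* ℂ[X])).det = 1 := by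
    rw [← det_mul, ← Matrix.map_mul, hU]; simp
  rw [Matrix.charpoly, Matrix.charpoly, hmap, det_mul, det_mul]
  ring_nf
  calc (U.map (C : ℂ →+* ℂ[X])).det * (charmatrix D).det * ((star U).map (C : ℂ →+* ℂ[X])).det
      = (charmatrix D).det * ((U.map (C : ℂ →+* ℂ[X])).det * ((star U).map (C : ℂ →+* ℂ[X])).det) := by ring
    _ = (charmatrix D).det := by rw [hdet1, mul_one]

lemma charpoly_diagonal (d : I → ℂ) :
    (Matrix.diagonal d).charpoly = ∏ i : I, (X - C (d i)) := by
  have : charmatrix (Matrix.diagonal d) = Matrix.diagonal (fun i => (X : ℂ[X]) - C (d i)) := by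
    refine Matrix.ext fun i j => ?_
    by_cases h : i = j
    · subst h; rw [charmatrix_apply_eq, Matrix.diagonal_apply_eq d i, Matrix.diagonal_apply_eq (fun i => (X : ℂ[X]) - C (d i)) i]
    · rw [charmatrix_apply_ne _ _ _ h, diagonal_apply_ne _ h, diagonal_apply_ne _ h]; simp
  rw [Matrix.charpoly, this, det_diagonal]

lemma charpoly_hermitian {A : Matrix I I ℂ} (hA : A.IsHermitian) :
    A.charpoly = ∏ i : I, (X - C ((hA.eigenvalues i : ℝ) : ℂ)) := by
  rw [charpoly_unitary_conj (hA.eigenvectorUnitary : Matrix I I ℂ)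
      (Matrix.mem_unitaryGroup_iff.mp hA.eigenvectorUnitary.2) hA.spectral_theorem,
    charpoly_diagonal]
  rfl

lemma roots_charpoly_hermitian {A : Matrix I I ℂ} (hA : A.IsHermitian) :
    (A.charpoly.roots.map Complex.re) = Finset.univ.val.map hA.eigenvalues := by
  rw [charpoly_hermitian hA]
  have : (∏ i : I, ((X : ℂ[X]) - C ((hA.eigenvalues i : ℝ) : ℂ)))
      = (Multiset.map (fun a => (X : ℂ[X]) - C a)
          (Finset.univ.val.map (fun i => ((hA.eigenvalues i : ℝ) : ℂ)))).prod := by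
    rw [Multiset.map_map]; rfl
  rw [this, Polynomial.roots_multiset_prod_X_sub_C, Multiset.map_map]
  congr 1


lemma exists_sorted_eigendata {A : Matrix I I ℂ} (hA : A.IsHermitian) :
    ∃ (g : Fin (Fintype.card I) → ℝ) (u : Fin (Fintype.card I) → I → ℂ),
      Monotone g ∧
      (∀ j, A *ᵥ u j = fun v => (g j : ℂ) * u j v) ∧
      (∀ j j', inn (u j) (u j') = if j = j' then 1 else 0) ∧
      (∀ x : I → ℂ, x = ∑ j, inn x (u j) • u j) ∧
      (∀ (k : ℕ) (hk : k < Fintype.card I), lamk A k = g ⟨k, hk⟩) := by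
  set n := Fintype.card I with hn
  let e : Fin n ≃ I := (Fintype.equivFin I).symm
  let f : Fin n → ℝ := hA.eigenvalues ∘ e
  let σ : Equiv.Perm (Fin n) := Tuple.sort f
  let eqv : Fin n ≃ I := (σ : Fin n ≃ Fin n).trans e
  let b := hA.eigenvectorBasis
  refine ⟨f ∘ σ, fun j => ⇑(b (eqv j)), Tuple.monotone_sort f, ?_, ?_, ?_, ?_⟩
  · intro j
    have h := hA.mulVec_eigenvectorBasis (eqv j)
    funext v
    have := congrFun h v
    simp [Complex.real_smul] at this
    exact this
  · intro j j'
    have h := orthonormal_iff_ite.mp b.orthonormal (eqv j) (eqv j')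
    have h2 : inn (⇑(b (eqv j)) : I → ℂ) ⇑(b (eqv j'))
        = star (inner (𝕜 := ℂ) (b (eqv j)) (b (eqv j'))) := by
      simp [inn, PiLp.inner_apply, RCLike.inner_apply, Complex.star_def, map_sum, _root_.map_mul,
        Complex.conj_conj, mul_comm]
    rw [h2, h]
    by_cases hjj : j = j'
    · simp [hjj]
    · have : eqv j ≠ eqv j' := fun hc => hjj (eqv.injective hc)
      simp [hjj, this]
  · intro x
    have hinn : ∀ j, inn x (⇑(b (eqv j)) : I → ℂ) = inner (𝕜 := ℂ) (b (eqv j)) (WithLp.toLp 2 x : EuclideanSpace ℂ I) := by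
      intro j
      simp [inn, PiLp.inner_apply, RCLike.inner_apply, Complex.star_def, mul_comm]
    have hx := b.sum_repr (WithLp.toLp 2 x : EuclideanSpace ℂ I)
    have hre : ∀ i, b.repr (WithLp.toLp 2 x : EuclideanSpace ℂ I) i = inner (𝕜 := ℂ) (b i) (WithLp.toLp 2 x : EuclideanSpace ℂ I) :=
      fun i => b.repr_apply_apply _ i
    have hsum : ∑ j, inn x (⇑(b (eqv j)) : I → ℂ) • (⇑(b (eqv j)) : I → ℂ)
        = ∑ i : I, b.repr (WithLp.toLp 2 x : EuclideanSpace ℂ I) i • (⇑(b i) : I → ℂ) := by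
      refine Fintype.sum_bijective eqv eqv.bijective _ _ fun j => ?_
      rw [hinn, hre]
    rw [hsum]
    have h2 := congrArg WithLp.ofLp hx
    rw [WithLp.ofLp_sum] at h2
    simpa using h2.symm
  · intro k hk
    have hchar := roots_charpoly_hermitian hA
    have huniv : (Finset.univ : Finset I).val = Finset.univ.val.map eqv := by
      conv_lhs => rw [← Finset.map_univ_equiv eqv]
      rfl
    have hmul : Finset.univ.val.map hA.eigenvalues = Multiset.map (f ∘ σ) Finset.univ.val := by
      rw [huniv, Multiset.map_map]
      rfl
    have hsort : ((A.charpoly.roots.map Complex.re).sort (· ≤ ·)) = List.ofFn (f ∘ σ) := by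
      refine List.Perm.eq_of_pairwise' (Multiset.pairwise_sort _ _)
        (List.sortedLE_iff_pairwise.mp (List.sortedLE_ofFn_iff.mpr (Tuple.monotone_sort f)))
        (Multiset.coe_eq_coe.mp ?_)
      rw [Multiset.sort_eq, hchar, hmul, List.ofFn_eq_map]
      rw [Fin.univ_def]
      rfl
    show ((A.charpoly.roots.map Complex.re).sort (· ≤ ·)).getD k 0 = (f ∘ σ) ⟨k, hk⟩
    rw [hsort]
    have hlen : k < (List.ofFn (f ∘ σ)).length := by simpa using hk
    rw [List.getD_eq_getElem _ _ hlen, List.getElem_ofFn]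

lemma eigendata_inn {A : Matrix I I ℂ} {N : ℕ} {g : Fin N → ℝ} {u : Fin N → I → ℂ}
    (heig : ∀ j, A *ᵥ u j = fun v => (g j : ℂ) * u j v)
    (horth : ∀ j j', inn (u j) (u j') = if j = j' then 1 else 0)
    (hcomp : ∀ x : I → ℂ, x = ∑ j, inn x (u j) • u j) (x : I → ℂ) :
    (inn (A *ᵥ x) x).re = ∑ j, g j * Complex.normSq (inn x (u j))
    ∧ nrm x = ∑ j, Complex.normSq (inn x (u j)) := by
  have heig' : ∀ j, A *ᵥ u j = (g j : ℂ) • u j := by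
    intro j; rw [heig j]; funext v; simp [Pi.smul_apply, smul_eq_mul]
  have hux : ∀ j, inn (u j) x = star (inn x (u j)) := by
    intro j
    conv_lhs => rw [hcomp x]
    rw [inn_sum_right]
    have h : ∀ j' ∈ Finset.univ, inn (u j) (inn x (u j') • u j')
        = if j = j' then star (inn x (u j')) else 0 := by
      intro j' _
      rw [inn_smul_right, horth]
      by_cases h : j = j' <;> simp [h]
    rw [Finset.sum_congr rfl h]
    simp
  have h1 : A *ᵥ x = ∑ j, inn x (u j) • ((g j : ℂ) • u j) := by
    conv_lhs => rw [hcomp x]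
    have h2 : A.mulVecLin (∑ j, inn x (u j) • u j) = ∑ j, inn x (u j) • A.mulVecLin (u j) := by
      rw [map_sum]
      exact Finset.sum_congr rfl fun j _ => A.mulVecLin.map_smul _ _
    simp only [Matrix.mulVecLin_apply] at h2
    rw [h2]
    exact Finset.sum_congr rfl fun j _ => by rw [heig' j]
  constructor
  · have h3 : inn (A *ᵥ x) x = ((∑ j, g j * Complex.normSq (inn x (u j)) : ℝ) : ℂ) := by
      rw [h1, inn_sum_left]
      have h : ∀ j ∈ Finset.univ, inn (inn x (u j) • ((g j : ℂ) • u j)) x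
          = ((g j * Complex.normSq (inn x (u j)) : ℝ) : ℂ) := by
        intro j _
        rw [inn_smul_left, inn_smul_left, hux]
        rw [show inn x (u j) * ((g j:ℂ) * star (inn x (u j)))
            = (g j:ℂ) * (inn x (u j) * star (inn x (u j))) by ring]
        rw [Complex.star_def, Complex.mul_conj]
        push_cast; ring
      rw [Finset.sum_congr rfl h]
      push_cast; ring
    rw [h3, Complex.ofReal_re]
  · have h3 : inn x x = ((∑ j, Complex.normSq (inn x (u j)) : ℝ) : ℂ) := by
      nth_rewrite 1 [hcomp x]
      rw [inn_sum_left]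
      have h : ∀ j ∈ Finset.univ, inn (inn x (u j) • u j) x
          = ((Complex.normSq (inn x (u j)) : ℝ) : ℂ) := by
        intro j _
        rw [inn_smul_left, hux, Complex.star_def, Complex.mul_conj]
      rw [Finset.sum_congr rfl h]
      push_cast; ring
    have h4 := inn_self x
    rw [h3] at h4
    exact_mod_cast h4.symm

lemma nrm_eigvec {N : ℕ} {u : Fin N → I → ℂ}
    (horth : ∀ j j', inn (u j) (u j') = if j = j' then 1 else 0) (j : Fin N) :
    nrm (u j) = 1 := by
  have h := horth j j
  rw [inn_self] at h
  simp at h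
  exact_mod_cast h

lemma g_nonneg {A : Matrix I I ℂ} {N : ℕ} {g : Fin N → ℝ} {u : Fin N → I → ℂ}
    (heig : ∀ j, A *ᵥ u j = fun v => (g j : ℂ) * u j v)
    (horth : ∀ j j', inn (u j) (u j') = if j = j' then 1 else 0)
    (hnn : ∀ x, 0 ≤ (inn (A *ᵥ x) x).re) (j : Fin N) : 0 ≤ g j := by
  have heig' : A *ᵥ u j = (g j : ℂ) • u j := by
    rw [heig j]; funext v; simp [Pi.smul_apply, smul_eq_mul]
  have h := hnn (u j)
  rw [heig', inn_smul_left, horth] at h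
  simpa using h

lemma ray_upper {A : Matrix I I ℂ} {N : ℕ} {g : Fin N → ℝ} {u : Fin N → I → ℂ}
    (heig : ∀ j, A *ᵥ u j = fun v => (g j : ℂ) * u j v)
    (horth : ∀ j j', inn (u j) (u j') = if j = j' then 1 else 0)
    (hcomp : ∀ x : I → ℂ, x = ∑ j, inn x (u j) • u j)
    (hg : Monotone g) (t : Fin N) (x : I → ℂ)
    (hx : ∀ j : Fin N, (t:ℕ) < (j:ℕ) → inn x (u j) = 0) :
    (inn (A *ᵥ x) x).re ≤ g t * nrm x := by
  obtain ⟨h1, h2⟩ := eigendata_inn heig horth hcomp x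
  rw [h1, h2, Finset.mul_sum]
  refine Finset.sum_le_sum fun j _ => ?_
  by_cases h : (j:ℕ) ≤ (t:ℕ)
  · exact mul_le_mul_of_nonneg_right (hg (Fin.le_def.mpr h)) (Complex.normSq_nonneg _)
  · rw [hx j (by omega)]; simp

lemma ray_lower {A : Matrix I I ℂ} {N : ℕ} {g : Fin N → ℝ} {u : Fin N → I → ℂ}
    (heig : ∀ j, A *ᵥ u j = fun v => (g j : ℂ) * u j v)
    (horth : ∀ j j', inn (u j) (u j') = if j = j' then 1 else 0)
    (hcomp : ∀ x : I → ℂ, x = ∑ j, inn x (u j) • u j)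
    (hg : Monotone g) (t : Fin N) (x : I → ℂ)
    (hx : ∀ j : Fin N, (j:ℕ) < (t:ℕ) → inn x (u j) = 0) :
    g t * nrm x ≤ (inn (A *ᵥ x) x).re := by
  obtain ⟨h1, h2⟩ := eigendata_inn heig horth hcomp x
  rw [h1, h2, Finset.mul_sum]
  refine Finset.sum_le_sum fun j _ => ?_
  by_cases h : (t:ℕ) ≤ (j:ℕ)
  · exact mul_le_mul_of_nonneg_right (hg (Fin.le_def.mpr h)) (Complex.normSq_nonneg _)
  · rw [hx j (by omega)]; simp

lemma interlace {I' J : Type} [Fintype I'] [DecidableEq I'] [Fintype J] [DecidableEq J]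
    {P : Matrix I' I' ℂ} (hP : P.IsHermitian) {Q : Matrix J J ℂ} (hQ : Q.IsHermitian)
    (hPnn : ∀ x, 0 ≤ (inn (P *ᵥ x) x).re) (hQnn : ∀ y, 0 ≤ (inn (Q *ᵥ y) y).re)
    (T : (I' → ℂ) →ₗ[ℂ] (J → ℂ)) (K : Submodule ℂ (I' → ℂ)) (d : ℕ)
    (hK : Fintype.card I' - d ≤ Module.finrank ℂ K)
    (hTinj : ∀ x ∈ K, T x = 0 → x = 0)
    (hform : ∀ x ∈ K, (inn (Q *ᵥ T x) (T x)).re ≤ (inn (P *ᵥ x) x).re)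
    (hnorm : ∀ x ∈ K, nrm x ≤ nrm (T x))
    (k : ℕ) (hkJ : k < Fintype.card J) (hkI : k + d < Fintype.card I') :
    lamk Q k ≤ lamk P (k + d) := by
  obtain ⟨gP, uP, hgPmono, hPeig, hPorth, hPcomp, hPlam⟩ := exists_sorted_eigendata hP
  obtain ⟨gQ, uQ, hgQmono, hQeig, hQorth, hQcomp, hQlam⟩ := exists_sorted_eigendata hQ
  let a : ℕ := Fintype.card I' - (k + d + 1)
  have hidx : ∀ i : Fin a, k + d + 1 + (i:ℕ) < Fintype.card I' := fun i => by
    have := i.isLt; simp only [a] at this; omega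
  let Φ : K →ₗ[ℂ] ((Fin a → ℂ) × (Fin k → ℂ)) :=
    { toFun := fun x => (fun i => inn (x : I' → ℂ) (uP ⟨k + d + 1 + (i:ℕ), hidx i⟩),
        fun i => inn (T (x : I' → ℂ)) (uQ ⟨(i:ℕ), by omega⟩))
      map_add' := by
        intro x y
        refine Prod.ext ?_ ?_ <;> funext i <;>
          simp [inn_add_left, Submodule.coe_add, map_add]
      map_smul' := by
        intro c x
        refine Prod.ext ?_ ?_ <;> funext i <;>
          simp [inn_smul_left, Submodule.coe_smul, _root_.map_smul] }
  have hrank : Module.finrank ℂ ((Fin a → ℂ) × (Fin k → ℂ)) = a + k := by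
    rw [Module.finrank_prod, Module.finrank_pi, Module.finrank_pi]
    simp
  have hKne : LinearMap.ker Φ ≠ ⊥ := by
    intro hbot
    have hinj : Function.Injective Φ := LinearMap.ker_eq_bot.mp hbot
    have hle := LinearMap.finrank_le_finrank_of_injective hinj
    rw [hrank] at hle
    have ha : a = Fintype.card I' - (k + d + 1) := rfl
    omega
  obtain ⟨x, hxker, hxne⟩ := (Submodule.ne_bot_iff _).mp hKne
  have hΦx : Φ x = 0 := LinearMap.mem_ker.mp hxker
  have hx1 : ∀ j : Fin (Fintype.card I'), k + d < (j:ℕ) → inn (x : I' → ℂ) (uP j) = 0 := by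
    intro j hj
    have hia : (j:ℕ) - (k + d + 1) < a := by have := j.isLt; simp only [a]; omega
    have h := congrFun (congrArg Prod.fst hΦx) ⟨(j:ℕ) - (k+d+1), hia⟩
    have hj' : (⟨k + d + 1 + ((j:ℕ) - (k+d+1)), hidx ⟨(j:ℕ) - (k+d+1), hia⟩⟩ :
        Fin (Fintype.card I')) = j := Fin.ext (by simp; omega)
    rw [show ((0 : (Fin a → ℂ) × (Fin k → ℂ)).fst ⟨(j:ℕ) - (k+d+1), hia⟩) = 0 from rfl] at h
    simpa [Φ, hj'] using h
  have hx2 : ∀ i : Fin (Fintype.card J), (i:ℕ) < k → inn (T (x : I' → ℂ)) (uQ i) = 0 := by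
    intro i hi
    have h := congrFun (congrArg Prod.snd hΦx) ⟨(i:ℕ), hi⟩
    simpa [Φ, Fin.eta] using h
  have hxK : (x : I' → ℂ) ∈ K := x.2
  have hTx : T (x : I' → ℂ) ≠ 0 := by
    intro h0
    exact hxne (Subtype.ext (hTinj _ hxK h0))
  have hlow := ray_lower hQeig hQorth hQcomp hgQmono ⟨k, hkJ⟩ (T (x : I' → ℂ))
    (fun j hj => hx2 j hj)
  have hup := ray_upper hPeig hPorth hPcomp hgPmono ⟨k + d, hkI⟩ ((x : I' → ℂ))
    (fun j hj => hx1 j hj)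
  have hgP0 : 0 ≤ gP ⟨k + d, hkI⟩ := g_nonneg hPeig hPorth hPnn _
  have hchain : gQ ⟨k, hkJ⟩ * nrm (T (x : I' → ℂ)) ≤ gP ⟨k+d, hkI⟩ * nrm (T (x : I' → ℂ)) := by
    calc gQ ⟨k, hkJ⟩ * nrm (T (x : I' → ℂ)) ≤ (inn (Q *ᵥ T (x : I' → ℂ)) (T (x : I' → ℂ))).re :=
        hlow
      _ ≤ (inn (P *ᵥ (x : I' → ℂ)) (x : I' → ℂ)).re := hform _ hxK
      _ ≤ gP ⟨k+d,hkI⟩ * nrm (x : I' → ℂ) := hup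
      _ ≤ gP ⟨k+d,hkI⟩ * nrm (T (x : I' → ℂ)) := mul_le_mul_of_nonneg_left (hnorm _ hxK) hgP0
  have hfin := le_of_mul_le_mul_right hchain (nrm_pos hTx)
  rw [hQlam k hkJ, hPlam (k+d) hkI]
  exact hfin

variable {V : Type} [Fintype V] [DecidableEq V]

lemma exp_conj_alpha (α : V → V → ℝ) (hα : ∀ v u, α v u = - α u v) (v u : V) :
    (starRingEnd ℂ) (Complex.exp (Complex.I * (α v u : ℝ)))
      = Complex.exp (Complex.I * (α u v : ℝ)) := by
  rw [← Complex.exp_conj, _root_.map_mul, Complex.conj_I, Complex.conj_ofReal, hα u v]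
  congr 1
  push_cast
  ring

lemma normSq_exp_I (x : ℝ) : Complex.normSq (Complex.exp (Complex.I * (x : ℝ))) = 1 := by
  rw [Complex.normSq_eq_norm_sq, Complex.norm_exp]
  simp [Complex.mul_re]

lemma combLap_isHermitian (G : SimpleGraph V) (α : V → V → ℝ)
    (hα : ∀ v u, α v u = - α u v) : (combLap G α).IsHermitian := by
  have hwsymm : ∀ v u : V, (if G.Adj v u then (1:ℝ) else 0) = (if G.Adj u v then (1:ℝ) else 0) := by
    intro v u; rw [G.adj_comm]
  refine Matrix.ext fun v u => ?_
  rw [Matrix.conjTranspose_apply]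
  simp only [combLap, magLap, div_one]
  by_cases h : v = u
  · subst h
    simp [Complex.star_def, map_sub, _root_.map_mul, Complex.conj_ofReal, exp_conj_alpha α hα]
  · have h' : ¬ u = v := fun hc => h hc.symm
    rw [if_neg h', if_neg h, zero_sub, zero_sub, star_neg, neg_inj, star_mul']
    simp only [Complex.star_def]
    rw [Complex.conj_ofReal, exp_conj_alpha α hα u v, hwsymm v u]

lemma combForm_nonneg (G : SimpleGraph V) (α : V → V → ℝ) (φ : V → ℂ) :
    0 ≤ combForm G α φ := by
  unfold combForm
  have : (0:ℝ) ≤ ∑ v : V, ∑ u : V, if G.Adj v u then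
      Complex.normSq (φ v - Complex.exp (Complex.I * (α v u : ℝ)) * φ u) else 0 := by
    refine Finset.sum_nonneg fun v _ => Finset.sum_nonneg fun u _ => ?_
    by_cases h : G.Adj v u <;> simp [h, Complex.normSq_nonneg]
  linarith

lemma green (G : SimpleGraph V) (α : V → V → ℝ) (hα : ∀ v u, α v u = - α u v) (φ : V → ℂ) :
    (inn (combLap G α *ᵥ φ) φ).re = combForm G α φ := by
  set w : V → V → ℝ := fun v u => if G.Adj v u then (1:ℝ) else 0 with hw
  set E : V → V → ℂ := fun v u => Complex.exp (Complex.I * (α v u : ℝ)) with hE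
  have hwsymm : ∀ v u, w v u = w u v := by
    intro v u; simp only [hw]; rw [G.adj_comm]
  have hEconj : ∀ v u, (starRingEnd ℂ) (E v u) = E u v := fun v u => exp_conj_alpha α hα v u
  have hEnorm : ∀ v u, Complex.normSq (E v u) = 1 := fun v u => normSq_exp_I _
  have hmv : ∀ v, (combLap G α *ᵥ φ) v
      = ((∑ u, w v u : ℝ) : ℂ) * φ v - ∑ u, ((w v u : ℝ) : ℂ) * (E v u * φ u) := by
    intro v
    simp only [combLap, magLap, Matrix.mulVec, dotProduct, div_one]
    rw [show ∀ f : V → ℂ, ∑ u, f u = ∑ u, f u from fun _ => rfl]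
    simp only [sub_mul, Finset.sum_sub_distrib]
    congr 1
    · simp only [ite_mul, zero_mul, Finset.sum_ite_eq, Finset.mem_univ, if_true]; rfl
    · refine Finset.sum_congr rfl fun u _ => by ring
  set F : V → V → ℝ := fun v u => w v u * Complex.normSq (φ v)
      - w v u * (E v u * φ u * star (φ v)).re with hF
  have stepA : (inn (combLap G α *ᵥ φ) φ).re = ∑ v, ∑ u, F v u := by
    rw [inn, Complex.re_sum]
    refine Finset.sum_congr rfl fun v _ => ?_
    rw [hmv v, sub_mul, Complex.sub_re]
    have e1 : ((((∑ u, w v u : ℝ)) : ℂ) * φ v * star (φ v)).re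
        = ∑ u, w v u * Complex.normSq (φ v) := by
      rw [mul_assoc, Complex.star_def, Complex.mul_conj, ← Complex.ofReal_mul,
        Complex.ofReal_re, Finset.sum_mul]
    have e2 : ((∑ u, ((w v u : ℝ) : ℂ) * (E v u * φ u)) * star (φ v)).re
        = ∑ u, w v u * (E v u * φ u * star (φ v)).re := by
      rw [Finset.sum_mul, Complex.re_sum]
      refine Finset.sum_congr rfl fun u _ => ?_
      rw [mul_assoc, Complex.re_ofReal_mul]
    rw [e1, e2, ← Finset.sum_sub_distrib]
  have stepB : combForm G α φ = ∑ v, ∑ u, F v u := by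
    have hterm : ∀ v u, (if G.Adj v u then
        Complex.normSq (φ v - Complex.exp (Complex.I * (α v u : ℝ)) * φ u) else 0)
        = w v u * Complex.normSq (φ v) + w v u * Complex.normSq (φ u)
          - 2 * (w v u * (φ v * (E u v * star (φ u))).re) := by
      intro v u
      have hns : Complex.normSq (φ v - E v u * φ u)
          = Complex.normSq (φ v) + Complex.normSq (φ u)
            - 2 * (φ v * (E u v * star (φ u))).re := by
        rw [Complex.normSq_sub, Complex.normSq_mul, hEnorm, one_mul, _root_.map_mul, hEconj]
        rw [Complex.star_def]
      by_cases h : G.Adj v u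
      · simp only [hw, if_pos h, ← hE]
        rw [hns]; ring
      · simp only [hw, if_neg h, ← hE]
        ring
    unfold combForm
    rw [show (∑ v : V, ∑ u : V, if G.Adj v u then
        Complex.normSq (φ v - Complex.exp (Complex.I * (α v u : ℝ)) * φ u) else 0)
      = ∑ v : V, ∑ u : V, (w v u * Complex.normSq (φ v) + w v u * Complex.normSq (φ u)
          - 2 * (w v u * (φ v * (E u v * star (φ u))).re)) from
      Finset.sum_congr rfl fun v _ => Finset.sum_congr rfl fun u _ => hterm v u]
    have hS1' : (∑ v : V, ∑ u : V, w v u * Complex.normSq (φ u))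
        = ∑ v : V, ∑ u : V, w v u * Complex.normSq (φ v) := by
      rw [Finset.sum_comm]
      exact Finset.sum_congr rfl fun v _ => Finset.sum_congr rfl fun u _ => by
        rw [hwsymm v u]
    have hS2 : (∑ v : V, ∑ u : V, w v u * (φ v * (E u v * star (φ u))).re)
        = ∑ v : V, ∑ u : V, w v u * (E v u * φ u * star (φ v)).re := by
      rw [Finset.sum_comm]
      refine Finset.sum_congr rfl fun v _ => Finset.sum_congr rfl fun u _ => ?_
      rw [hwsymm v u]
      congr 1
      exact congrArg Complex.re (by ring)
    simp only [Finset.sum_sub_distrib, Finset.sum_add_distrib, ← Finset.mul_sum]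
    rw [hS1', hS2]
    simp only [hF, Finset.sum_sub_distrib, ← Finset.mul_sum]
    ring
  rw [stepA, ← stepB]

lemma sum_split (v₂ : V) (f : V → ℝ) :
    ∑ v, f v = (∑ v' : {v : V // v ≠ v₂}, f v'.val) + f v₂ := by
  rw [← Finset.sum_erase_add Finset.univ f (Finset.mem_univ v₂)]
  congr 1
  exact Finset.sum_subtype _ (fun x => by simp) _

section Lift
variable {v₁ v₂ : V} (hv : v₁ ≠ v₂)

lemma liftFun_apply_ne (ψ : {v : V // v ≠ v₂} → ℂ) {v : V} (h : v ≠ v₂) :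
    liftFun hv ψ v = ψ ⟨v, h⟩ := dif_neg h

lemma liftFun_apply_v₂ (ψ : {v : V // v ≠ v₂} → ℂ) : liftFun hv ψ v₂ = ψ ⟨v₁, hv⟩ := dif_pos rfl

lemma nrm_liftFun (ψ : {v : V // v ≠ v₂} → ℂ) :
    nrm (liftFun hv ψ) = nrm ψ + Complex.normSq (ψ ⟨v₁, hv⟩) := by
  unfold nrm
  rw [sum_split v₂ (fun v => Complex.normSq (liftFun hv ψ v))]
  congr 1
  · exact Finset.sum_congr rfl fun v' _ => by rw [liftFun_apply_ne hv _ v'.2]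
  · rw [liftFun_apply_v₂]

end Lift

lemma nrm_update (φ : V → ℂ) (a : V) (c : ℂ) :
    nrm (Function.update φ a c) = nrm φ - Complex.normSq (φ a) + Complex.normSq c := by
  unfold nrm
  have h1 : ∀ v, Complex.normSq (Function.update φ a c v)
      = Function.update (fun v => Complex.normSq (φ v)) a (Complex.normSq c) v := by
    intro v
    by_cases h : v = a
    · subst h; simp
    · rw [Function.update_of_ne h, Function.update_of_ne h]
  rw [Finset.sum_congr rfl (fun v _ => h1 v), Finset.sum_update_of_mem (Finset.mem_univ a)]
  have h2 : ∑ v, Complex.normSq (φ v)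
      = Complex.normSq (φ a) + ∑ v ∈ Finset.univ.erase a, Complex.normSq (φ v) :=
    (Finset.add_sum_erase _ _ (Finset.mem_univ a)).symm
  rw [h2, Finset.sdiff_singleton_eq_erase]; ring

lemma combForm_mono (G : SimpleGraph V) (α : V → V → ℝ) (φ φ' : V → ℂ)
    (h : ∀ v u, G.Adj v u →
      Complex.normSq (φ' v - Complex.exp (Complex.I * (α v u : ℝ)) * φ' u)
        ≤ Complex.normSq (φ v - Complex.exp (Complex.I * (α v u : ℝ)) * φ u)) :
    combForm G α φ' ≤ combForm G α φ := by
  unfold combForm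
  have hle : (∑ v : V, ∑ u : V, if G.Adj v u then
      Complex.normSq (φ' v - Complex.exp (Complex.I * (α v u : ℝ)) * φ' u) else 0)
      ≤ ∑ v : V, ∑ u : V, if G.Adj v u then
      Complex.normSq (φ v - Complex.exp (Complex.I * (α v u : ℝ)) * φ u) else 0 := by
    refine Finset.sum_le_sum fun v _ => Finset.sum_le_sum fun u _ => ?_
    by_cases hadj : G.Adj v u
    · rw [if_pos hadj, if_pos hadj]; exact h v u hadj
    · rw [if_neg hadj, if_neg hadj]
  linarith

lemma exp_rev (α : V → V → ℝ) (hα : ∀ v u, α v u = - α u v) {v u : V}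
    (h : Complex.exp (Complex.I * (α v u : ℝ)) = 1) :
    Complex.exp (Complex.I * (α u v : ℝ)) = 1 := by
  have h2 : Complex.I * ((α u v : ℝ) : ℂ) = -(Complex.I * ((α v u : ℝ) : ℂ)) := by
    rw [hα u v]; push_cast; ring
  rw [h2, Complex.exp_neg, h, inv_one]

lemma exp_two_pi_int (m : ℤ) :
    Complex.exp (Complex.I * ((2 * Real.pi * m : ℝ) : ℝ)) = 1 := by
  have h : Complex.I * ((2 * Real.pi * m : ℝ) : ℂ) = (m : ℂ) * (2 * (Real.pi : ℂ) * Complex.I) := by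
    push_cast; ring
  rw [show ((2 * Real.pi * m : ℝ) : ℂ) = ((2 * Real.pi * m : ℝ) : ℂ) from rfl, h,
    Complex.exp_int_mul_two_pi_mul_I]

lemma no_adj_of_degree_zero {G : SimpleGraph V} {v : V} (h : G.degree v = 0) :
    ∀ u, ¬ G.Adj v u := by
  intro u hadj
  have hm : u ∈ G.neighborFinset v := (SimpleGraph.mem_neighborFinset _ _ _).mpr hadj
  unfold SimpleGraph.degree at h
  rw [Finset.card_eq_zero] at h
  rw [h] at hm
  exact absurd hm (Finset.notMem_empty u)

lemma adj_unique_of_degree_one {G : SimpleGraph V} {v a : V} (h : G.degree v = 1)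
    (ha : G.Adj v a) : ∀ u, G.Adj v u → u = a := by
  intro u hu
  obtain ⟨b, hb⟩ := Finset.card_eq_one.mp h
  have h1 : u ∈ G.neighborFinset v := (SimpleGraph.mem_neighborFinset _ _ _).mpr hu
  have h2 : a ∈ G.neighborFinset v := (SimpleGraph.mem_neighborFinset _ _ _).mpr ha
  rw [hb, Finset.mem_singleton] at h1 h2
  rw [h1, h2]

lemma finrank_ker_ge {W : Type} [AddCommGroup W] [Module ℂ W] [FiniteDimensional ℂ W]
    (f : (V → ℂ) →ₗ[ℂ] W) :
    Fintype.card V - Module.finrank ℂ W ≤ Module.finrank ℂ (LinearMap.ker f) := by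
  have h := LinearMap.finrank_range_add_finrank_ker f
  have h2 : Module.finrank ℂ (LinearMap.range f) ≤ Module.finrank ℂ W := Submodule.finrank_le _
  have h3 : Module.finrank ℂ (V → ℂ) = Fintype.card V := Module.finrank_pi ℂ
  omega

end
end Stmt14Aux


open Matrix Stmt14Aux

/-- contracting two vertices of a graph with combinatorial
weights.  With `r = min(deg v₁, deg v₂)` and `s = 1` iff `v₁ ∼ v₂` with
`α v₁ v₂ ≡ 0 (mod 2π)`, the eigenvalues `μ_k` of the contracted Laplacian
`Δ̃` (the self-adjoint operator on `ℂ^{V ∖ {v₂}}` determined by the quadratic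
form `q ∘ L`) satisfy `λ_k ≤ μ_k` and `μ_k ≤ λ_{k+r+1−s}`. -/
theorem stmt14 {V : Type} [Fintype V] [DecidableEq V] [Nonempty V]
    (hn : 2 ≤ Fintype.card V)
    (G : SimpleGraph V) (α : V → V → ℝ) (hα : ∀ v u, α v u = - α u v)
    (v₁ v₂ : V) (hv : v₁ ≠ v₂)
    (B : Matrix {v : V // v ≠ v₂} {v : V // v ≠ v₂} ℂ)
    (hB_herm : B.IsHermitian)
    (hB : ∀ ψ : {v : V // v ≠ v₂} → ℂ,
      (∑ v' : {v : V // v ≠ v₂}, B.mulVec ψ v' * star (ψ v'))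
        = ((combForm G α (liftFun hv ψ) : ℝ) : ℂ)) :
    (∀ k : ℕ, 1 ≤ k → k ≤ Fintype.card V - 1 →
      lamk (combLap G α) (k - 1) ≤ lamk B (k - 1))
    ∧ (∀ k : ℕ, 1 ≤ k →
        k ≤ Fintype.card V
          - (min (G.degree v₁) (G.degree v₂) + 1
              - (if G.Adj v₁ v₂ ∧ ∃ n : ℤ, α v₁ v₂ = 2 * Real.pi * n then 1 else 0)) →
        lamk B (k - 1)
          ≤ lamk (combLap G α)
              ((k - 1) + (min (G.degree v₁) (G.degree v₂) + 1
                - (if G.Adj v₁ v₂ ∧ ∃ n : ℤ, α v₁ v₂ = 2 * Real.pi * n then 1 else 0)))) := by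
  have hcard' : Fintype.card {v : V // v ≠ v₂} = Fintype.card V - 1 := by
    have h := Fintype.card_subtype_compl (fun v : V => v = v₂)
    rw [Fintype.card_subtype_eq] at h
    exact h
  have hlapH := combLap_isHermitian G α hα
  have hBinn : ∀ ψ, inn (B *ᵥ ψ) ψ = ((combForm G α (liftFun hv ψ) : ℝ) : ℂ) := fun ψ => hB ψ
  have hBre : ∀ ψ, (inn (B *ᵥ ψ) ψ).re = combForm G α (liftFun hv ψ) := by
    intro ψ; rw [hBinn ψ, Complex.ofReal_re]
  have hBnn : ∀ ψ, 0 ≤ (inn (B *ᵥ ψ) ψ).re := by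
    intro ψ; rw [hBre]; exact combForm_nonneg _ _ _
  have hLnn : ∀ x, 0 ≤ (inn (combLap G α *ᵥ x) x).re := by
    intro x; rw [green G α hα]; exact combForm_nonneg _ _ _
  constructor
  · -- Part 1
    intro k hk1 hk2
    let L : ({v : V // v ≠ v₂} → ℂ) →ₗ[ℂ] (V → ℂ) :=
      { toFun := liftFun hv
        map_add' := by
          intro ψ χ; funext v; unfold liftFun; by_cases h : v = v₂ <;> simp [h]
        map_smul' := by
          intro c ψ; funext v; unfold liftFun; by_cases h : v = v₂ <;> simp [h] }
    have hL : ∀ ψ, L ψ = liftFun hv ψ := fun _ => rfl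
    have h := interlace (P := B) hB_herm (Q := combLap G α) hlapH hBnn hLnn L ⊤ 0
      (by rw [finrank_top, Module.finrank_pi]; omega)
      (by
        intro x _ h0
        funext v'
        have h1 := congrFun h0 v'.val
        rw [hL, liftFun_apply_ne hv x v'.2] at h1
        exact h1)
      (by
        intro x _
        rw [hL, green G α hα, hBre])
      (by
        intro x _
        rw [hL, nrm_liftFun hv]
        exact le_add_of_nonneg_right (Complex.normSq_nonneg _))
      (k - 1)
      (by omega)
      (by rw [hcard']; omega)
    simpa using h
  · -- Part 2
    intro k hk1 hk2
    set s : ℕ := if G.Adj v₁ v₂ ∧ ∃ n : ℤ, α v₁ v₂ = 2 * Real.pi * n then 1 else 0 with hs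
    set d : ℕ := min (G.degree v₁) (G.degree v₂) + 1 - s with hd
    have hs01 : s = 0 ∨ s = 1 := by rw [hs]; split <;> simp
    have hd1 : 1 ≤ d := by
      rcases hs01 with h0 | h1
      · omega
      · have hcond : G.Adj v₁ v₂ ∧ ∃ m : ℤ, α v₁ v₂ = 2 * Real.pi * m := by
          by_contra hc
          have h2 := hs
          rw [if_neg hc] at h2
          omega
        have hdeg1 : 0 < G.degree v₁ :=
          (G.degree_pos_iff_exists_adj v₁).mpr ⟨v₂, hcond.1⟩
        have hdeg2 : 0 < G.degree v₂ :=
          (G.degree_pos_iff_exists_adj v₂).mpr ⟨v₁, hcond.1.symm⟩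
        omega
    have key : ∀ (K : Submodule ℂ (V → ℂ)) (T : (V → ℂ) →ₗ[ℂ] ({v : V // v ≠ v₂} → ℂ)),
        (Fintype.card V - d ≤ Module.finrank ℂ K) →
        (∀ x ∈ K, T x = 0 → x = 0) →
        (∀ x ∈ K, (inn (B *ᵥ T x) (T x)).re ≤ (inn (combLap G α *ᵥ x) x).re) →
        (∀ x ∈ K, nrm x ≤ nrm (T x)) →
        lamk B (k-1) ≤ lamk (combLap G α) ((k-1) + d) := by
      intro K T hK hTinj hform hnorm
      refine interlace hlapH hB_herm hLnn hBnn T K d hK hTinj hform hnorm (k-1) ?_ ?_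
      · rw [hcard']; omega
      · omega
    by_cases hd2 : 2 ≤ d
    · -- Case A : two conditions
      let Ψ : (V → ℂ) →ₗ[ℂ] (ℂ × ℂ) := (LinearMap.proj v₁).prod (LinearMap.proj v₂)
      let T₀ : (V → ℂ) →ₗ[ℂ] ({v : V // v ≠ v₂} → ℂ) :=
        { toFun := fun φ v' => φ v'.val
          map_add' := fun _ _ => rfl
          map_smul' := fun _ _ => rfl }
      have hmem : ∀ x ∈ LinearMap.ker Ψ, x v₁ = 0 ∧ x v₂ = 0 := by
        intro x hx
        have h0 := LinearMap.mem_ker.mp hx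
        exact ⟨congrArg Prod.fst h0, congrArg Prod.snd h0⟩
      refine key (LinearMap.ker Ψ) T₀ ?_ ?_ ?_ ?_
      · have h1 := finrank_ker_ge (V := V) Ψ
        have hW : Module.finrank ℂ (ℂ × ℂ) = 2 := by
          rw [Module.finrank_prod, Module.finrank_self]
        rw [hW] at h1
        omega
      · intro x hx h0
        obtain ⟨hx1, hx2⟩ := hmem x hx
        funext v
        by_cases hvv : v = v₂
        · rw [hvv, hx2]; rfl
        · exact congrFun h0 ⟨v, hvv⟩
      · intro x hx
        obtain ⟨hx1, hx2⟩ := hmem x hx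
        have hlift : liftFun hv (T₀ x) = x := by
          funext v
          by_cases hvv : v = v₂
          · rw [hvv, liftFun_apply_v₂]
            show x v₁ = x v₂
            rw [hx1, hx2]
          · rw [liftFun_apply_ne hv _ hvv]; rfl
        rw [hBre (T₀ x), hlift, green G α hα]
      · intro x hx
        obtain ⟨_, hx2⟩ := hmem x hx
        have heq : nrm x = nrm (T₀ x) := by
          unfold nrm
          rw [sum_split v₂ (fun v => Complex.normSq (x v)), hx2]
          simp only [Complex.normSq_zero, add_zero]
          rfl
        rw [heq]
    · -- Case B : d = 1
      have hH : (∀ u, G.Adj v₂ u → u = v₁ ∧ Complex.exp (Complex.I * (α v₂ u : ℝ)) = 1)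
          ∨ (∀ u, G.Adj v₁ u → u = v₂ ∧ Complex.exp (Complex.I * (α v₁ u : ℝ)) = 1) := by
        rcases hs01 with h0 | h1
        · have hmin : min (G.degree v₁) (G.degree v₂) = 0 := by omega
          rcases Nat.min_eq_zero_iff.mp hmin with hdeg | hdeg
          · right; intro u hu; exact absurd hu (no_adj_of_degree_zero hdeg u)
          · left; intro u hu; exact absurd hu (no_adj_of_degree_zero hdeg u)
        · have hcond : G.Adj v₁ v₂ ∧ ∃ m : ℤ, α v₁ v₂ = 2 * Real.pi * m := by
            by_contra hc
            have h2 := hs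
            rw [if_neg hc] at h2
            omega
          obtain ⟨hadj, m, hm⟩ := hcond
          have he1 : Complex.exp (Complex.I * (α v₁ v₂ : ℝ)) = 1 := by
            rw [hm]; exact exp_two_pi_int m
          have he2 : Complex.exp (Complex.I * (α v₂ v₁ : ℝ)) = 1 := exp_rev α hα he1
          have hmin : min (G.degree v₁) (G.degree v₂) = 1 := by omega
          rcases le_total (G.degree v₁) (G.degree v₂) with hle | hle
          · have hdeg : G.degree v₁ = 1 := by rw [min_eq_left hle] at hmin; exact hmin
            right; intro u hu
            have huv := adj_unique_of_degree_one hdeg hadj u hu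
            exact ⟨huv, by rw [huv]; exact he1⟩
          · have hdeg : G.degree v₂ = 1 := by rw [min_eq_right hle] at hmin; exact hmin
            left; intro u hu
            have huv := adj_unique_of_degree_one hdeg hadj.symm u hu
            exact ⟨huv, by rw [huv]; exact he2⟩
      rcases hH with hH2 | hH1
      · -- H₂ : all edges at v₂ go to v₁ with trivial flux
        let T₀ : (V → ℂ) →ₗ[ℂ] ({v : V // v ≠ v₂} → ℂ) :=
          { toFun := fun φ v' => φ v'.val
            map_add' := fun _ _ => rfl
            map_smul' := fun _ _ => rfl }
        refine key (LinearMap.ker (LinearMap.proj v₂)) T₀ ?_ ?_ ?_ ?_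
        · have h1 := finrank_ker_ge (V := V) (LinearMap.proj (R := ℂ) (φ := fun _ : V => ℂ) v₂)
          rw [Module.finrank_self] at h1
          omega
        · intro x hx h0
          have hx2 : x v₂ = 0 := LinearMap.mem_ker.mp hx
          funext v
          by_cases hvv : v = v₂
          · rw [hvv, hx2]; rfl
          · exact congrFun h0 ⟨v, hvv⟩
        · intro x hx
          have hx2 : x v₂ = 0 := LinearMap.mem_ker.mp hx
          have hy : ∀ v, liftFun hv (T₀ x) v = if v = v₂ then x v₁ else x v := by
            intro v
            by_cases hvv : v = v₂
            · rw [hvv, liftFun_apply_v₂, if_pos rfl]; rfl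
            · rw [liftFun_apply_ne hv _ hvv, if_neg hvv]; rfl
          rw [hBre (T₀ x), green G α hα]
          refine combForm_mono G α x (liftFun hv (T₀ x)) ?_
          intro v u hadj
          by_cases hvv : v = v₂
          · rw [hvv] at hadj ⊢
            obtain ⟨hu1, hexp⟩ := hH2 u hadj
            rw [hu1] at hexp ⊢
            rw [hy, hy, if_pos rfl, if_neg (fun hc => hv hc), hexp, one_mul, sub_self,
              Complex.normSq_zero]
            exact Complex.normSq_nonneg _
          · by_cases huv : u = v₂
            · rw [huv] at hadj ⊢
              obtain ⟨hu1, hexp⟩ := hH2 v (hadj.symm)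
              rw [hu1] at hexp ⊢
              have hexp' : Complex.exp (Complex.I * (α v₁ v₂ : ℝ)) = 1 := exp_rev α hα hexp
              rw [hy, hy, if_pos rfl, if_neg (fun hc => hv hc), hexp', one_mul, sub_self,
                Complex.normSq_zero]
              exact Complex.normSq_nonneg _
            · rw [hy, hy, if_neg hvv, if_neg huv]
        · intro x hx
          have hx2 : x v₂ = 0 := LinearMap.mem_ker.mp hx
          have heq : nrm x = nrm (T₀ x) := by
            unfold nrm
            rw [sum_split v₂ (fun v => Complex.normSq (x v)), hx2]
            simp only [Complex.normSq_zero, add_zero]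
            rfl
          rw [heq]
      · -- H₁ : all edges at v₁ go to v₂ with trivial flux
        let T₁ : (V → ℂ) →ₗ[ℂ] ({v : V // v ≠ v₂} → ℂ) :=
          { toFun := fun φ v' => if (v' : V) = v₁ then φ v₂ else φ v'.val
            map_add' := by intro φ χ; funext v'; by_cases h : (v' : V) = v₁ <;> simp [h]
            map_smul' := by intro c φ; funext v'; by_cases h : (v' : V) = v₁ <;> simp [h] }
        have hT₁ : ∀ (φ : V → ℂ) (v' : {v : V // v ≠ v₂}),
            T₁ φ v' = if (v' : V) = v₁ then φ v₂ else φ v'.val := fun _ _ => rfl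
        refine key (LinearMap.ker (LinearMap.proj v₁)) T₁ ?_ ?_ ?_ ?_
        · have h1 := finrank_ker_ge (V := V) (LinearMap.proj (R := ℂ) (φ := fun _ : V => ℂ) v₁)
          rw [Module.finrank_self] at h1
          omega
        · intro x hx h0
          have hx1 : x v₁ = 0 := LinearMap.mem_ker.mp hx
          funext v
          by_cases hvv1 : v = v₁
          · rw [hvv1, hx1]; rfl
          · by_cases hvv2 : v = v₂
            · have h1 := congrFun h0 ⟨v₁, hv⟩
              rw [hT₁, if_pos rfl] at h1
              rw [hvv2, h1]; rfl
            · have h1 := congrFun h0 ⟨v, hvv2⟩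
              rw [hT₁, if_neg hvv1] at h1
              exact h1
        · intro x hx
          have hx1 : x v₁ = 0 := LinearMap.mem_ker.mp hx
          have hy : ∀ v, liftFun hv (T₁ x) v = if v = v₁ then x v₂ else x v := by
            intro v
            by_cases hvv2 : v = v₂
            · rw [hvv2, liftFun_apply_v₂, hT₁, if_pos rfl, if_neg (fun hc => hv hc.symm)]
            · rw [liftFun_apply_ne hv _ hvv2, hT₁]
          rw [hBre (T₁ x), green G α hα]
          refine combForm_mono G α x (liftFun hv (T₁ x)) ?_
          intro v u hadj
          by_cases hvv : v = v₁
          · rw [hvv] at hadj ⊢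
            obtain ⟨hu2, hexp⟩ := hH1 u hadj
            rw [hu2] at hexp ⊢
            rw [hy, hy, if_pos rfl, if_neg (fun hc => hv hc.symm), hexp, one_mul, sub_self,
              Complex.normSq_zero]
            exact Complex.normSq_nonneg _
          · by_cases huv : u = v₁
            · rw [huv] at hadj ⊢
              obtain ⟨hu2, hexp⟩ := hH1 v (hadj.symm)
              rw [hu2] at hexp ⊢
              have hexp' : Complex.exp (Complex.I * (α v₂ v₁ : ℝ)) = 1 := exp_rev α hα hexp
              rw [hy, hy, if_pos rfl, if_neg (fun hc => hv hc.symm), hexp', one_mul, sub_self,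
                Complex.normSq_zero]
              exact Complex.normSq_nonneg _
            · rw [hy, hy, if_neg hvv, if_neg huv]
        · intro x hx
          have hx1 : x v₁ = 0 := LinearMap.mem_ker.mp hx
          have hy : liftFun hv (T₁ x) = Function.update x v₁ (x v₂) := by
            funext v
            rw [Function.update_apply]
            by_cases hvv2 : v = v₂
            · rw [hvv2, liftFun_apply_v₂, hT₁, if_pos rfl, if_neg (fun hc => hv hc.symm)]
            · rw [liftFun_apply_ne hv _ hvv2, hT₁]
          have h1 := nrm_liftFun hv (T₁ x)
          rw [hy, nrm_update] at h1
          rw [hx1] at h1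
          have h2 : T₁ x ⟨v₁, hv⟩ = x v₂ := by rw [hT₁, if_pos rfl]
          rw [h2] at h1
          simp only [Complex.normSq_zero] at h1
          have : nrm (T₁ x) = nrm x := by linarith
          rw [this]
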